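/- arXiv:2005.13629 — 7 statements merged into one kernel-verified Lean document; each statement's English description precedes it below -/
import Mathlib

section
/- Let n, t be positive integers. Let Q and Q′ be invertible n×n matrices over ℚ, let A be an n×n permutation matrix, and let U_1, …, U_t be diagonal n×n matrices over ℚ. Set U_a′ = A⁻¹·U_a·A for each a. Suppose that Q⁻¹·U_a·Q = Q′⁻¹·U_a′·Q′ for all a = 1, …, t, and that at least one of the matrices U_1, …, U_t has pairwise distinct diagonal entries. Then the matrix D := Q·Q′⁻¹·A⁻¹ is an invertible diagonal matrix, and consequently Q = D·A·Q′. -/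
open Matrix

theorem stmt_2 (n t : ℕ) (hn : 0 < n) (ht : 0 < t)
    (Q Q' : Matrix (Fin n) (Fin n) ℚ) (hQ : IsUnit Q) (hQ' : IsUnit Q')
    (σ : Equiv.Perm (Fin n)) (A : Matrix (Fin n) (Fin n) ℚ) (hA : A = σ.permMatrix ℚ)
    (U : Fin t → Matrix (Fin n) (Fin n) ℚ) (hU : ∀ a, (U a).IsDiag)
    (U' : Fin t → Matrix (Fin n) (Fin n) ℚ) (hU' : ∀ a, U' a = A⁻¹ * U a * A)
    (hconj : ∀ a, Q⁻¹ * U a * Q = Q'⁻¹ * U' a * Q')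
    (hdist : ∃ a, ∀ i j : Fin n, i ≠ j → U a i i ≠ U a j j) :
    (Q * Q'⁻¹ * A⁻¹).IsDiag ∧ IsUnit (Q * Q'⁻¹ * A⁻¹) ∧
      Q = (Q * Q'⁻¹ * A⁻¹) * A * Q' := by
  have hdQ : IsUnit Q.det := (Matrix.isUnit_iff_isUnit_det Q).mp hQ
  have hdQ' : IsUnit Q'.det := (Matrix.isUnit_iff_isUnit_det Q').mp hQ'
  have hdA : IsUnit A.det := by
    rw [hA, Matrix.det_permutation]
    rcases Int.units_eq_one_or σ.sign with h | h <;> simp [h]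
  obtain ⟨a, ha⟩ := hdist
  set D := Q * Q'⁻¹ * A⁻¹ with hD
  have h := hconj a
  rw [hU' a] at h
  -- derive U a * D = D * U a
  have key : U a * D = D * U a := by
    have h2 : U a * Q * Q'⁻¹ = Q * Q'⁻¹ * A⁻¹ * U a * A := by
      have := congrArg (fun M => Q * M * Q'⁻¹) h
      simp only [← mul_assoc] at this
      rwa [Matrix.mul_nonsing_inv Q hdQ, one_mul, mul_assoc _ Q' Q'⁻¹,
        Matrix.mul_nonsing_inv Q' hdQ', mul_one] at this
    have h3 := congrArg (fun M => M * A⁻¹) h2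
    have h3 : U a * Q * Q'⁻¹ * A⁻¹ = Q * Q'⁻¹ * A⁻¹ * U a * A * A⁻¹ := h3
    rw [mul_assoc _ A A⁻¹, Matrix.mul_nonsing_inv A hdA, mul_one] at h3
    simpa only [hD, mul_assoc] using h3
  have hdiag : D.IsDiag := by
    intro i j hij
    have hk := congrFun (congrFun key i) j
    have hl : (U a * D) i j = U a i i * D i j := by
      rw [Matrix.mul_apply]
      rw [Finset.sum_eq_single i]
      · intro b _ hb; rw [hU a (Ne.symm hb), zero_mul]
      · intro hi; exact absurd (Finset.mem_univ i) hi
    have hr : (D * U a) i j = D i j * U a j j := by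
      rw [Matrix.mul_apply]
      rw [Finset.sum_eq_single j]
      · intro b _ hb; rw [hU a hb, mul_zero]
      · intro hi; exact absurd (Finset.mem_univ j) hi
    rw [hl, hr] at hk
    have : (U a i i - U a j j) * D i j = 0 := by ring_nf; linarith [hk]
    rcases mul_eq_zero.mp this with h0 | h0
    · exact absurd (sub_eq_zero.mp h0) (ha i j hij)
    · exact h0
  have hunit : IsUnit D := by
    rw [hD]
    refine (hQ.mul ?_).mul ?_
    · exact (Matrix.isUnit_nonsing_inv_iff).mpr hQ'
    · exact (Matrix.isUnit_nonsing_inv_iff).mpr ((Matrix.isUnit_iff_isUnit_det A).mpr hdA)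
  refine ⟨hdiag, hunit, ?_⟩
  rw [hD, mul_assoc (Q * Q'⁻¹) A⁻¹ A, Matrix.nonsing_inv_mul A hdA, mul_one,
    mul_assoc, Matrix.nonsing_inv_mul Q' hdQ', mul_one]
end

section
/- Let n, p be positive integers with p ≤ n. Let P be a p×n matrix over ℚ, Q an n×p matrix over ℚ, and U_a, U_b diagonal n×n matrices over ℚ. Suppose W_0 = P·Q is invertible, and set W_a = P·U_a·Q, W_b = P·U_b·Q and B = Q·W_0⁻¹·P − 1_n. Then W_a·W_0⁻¹·W_b − W_b·W_0⁻¹·W_a = P·U_a·B·U_b·Q − P·U_b·B·U_a·Q. -/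
open Matrix

lemma isDiag_comm {n : ℕ} {A B : Matrix (Fin n) (Fin n) ℚ}
    (hA : A.IsDiag) (hB : B.IsDiag) : A * B = B * A := by
  ext i j
  simp only [Matrix.mul_apply]
  rw [Finset.sum_eq_single i, Finset.sum_eq_single i]
  · by_cases hij : i = j
    · subst hij; ring
    · rw [hA hij, hB hij]; ring
  · intro k _ hk; rw [hB (Ne.symm hk)]; ring
  · intro h; exact absurd (Finset.mem_univ i) h
  · intro k _ hk; rw [hA (Ne.symm hk)]; ring
  · intro h; exact absurd (Finset.mem_univ i) h

theorem stmt_8 (n p : ℕ) (hn : 0 < n) (hp : 0 < p) (hpn : p ≤ n)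
    (P : Matrix (Fin p) (Fin n) ℚ) (Q : Matrix (Fin n) (Fin p) ℚ)
    (Ua Ub : Matrix (Fin n) (Fin n) ℚ) (hUa : Ua.IsDiag) (hUb : Ub.IsDiag)
    (hW₀ : IsUnit (P * Q))
    (W₀ : Matrix (Fin p) (Fin p) ℚ) (hW₀' : W₀ = P * Q)
    (Wa : Matrix (Fin p) (Fin p) ℚ) (hWa : Wa = P * Ua * Q)
    (Wb : Matrix (Fin p) (Fin p) ℚ) (hWb : Wb = P * Ub * Q)
    (B : Matrix (Fin n) (Fin n) ℚ) (hB : B = Q * W₀⁻¹ * P - 1) :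
    Wa * W₀⁻¹ * Wb - Wb * W₀⁻¹ * Wa = P * Ua * B * Ub * Q - P * Ub * B * Ua * Q := by
  have hcomm : Ua * Ub = Ub * Ua := isDiag_comm hUa hUb
  subst hB hWa hWb
  simp only [Matrix.mul_sub, Matrix.sub_mul, Matrix.mul_one, Matrix.mul_assoc]
  rw [show Ua * (Ub * Q) = Ub * (Ua * Q) by rw [← Matrix.mul_assoc, hcomm, Matrix.mul_assoc]]
  abel
end

section
/- Let n, p, t be positive integers with p < n, and set r = n − p. Let P be a p×n matrix over ℚ, Q an n×p matrix over ℚ, and U_1, …, U_t diagonal n×n matrices over ℚ such that W_0 = P·Q is invertible. Set W_a = P·U_a·Q and Δ_{ab} = W_a·W_0⁻¹·W_b − W_b·W_0⁻¹·W_a for 1 ≤ a, b ≤ t. Then there exist matrices V_a ∈ ℚ^{p×r} and G_a ∈ ℚ^{r×p} for a = 1, …, t such that Δ_{ab} = V_a·G_b − V_b·G_a for all 1 ≤ a, b ≤ t. -/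
open Matrix

/-- Any `n × n` matrix of rank at most `r` factors through `ℚ^r`. -/
lemma factor_of_rank_le {n r : ℕ} (M : Matrix (Fin n) (Fin n) ℚ) (h : M.rank ≤ r) :
    ∃ (C : Matrix (Fin n) (Fin r) ℚ) (D : Matrix (Fin r) (Fin n) ℚ), M = C * D := by
  classical
  set S := LinearMap.range M.mulVecLin with hS
  have hd : Module.finrank ℚ S ≤ r := h
  let b : Module.Basis (Fin (Module.finrank ℚ S)) ℚ S := Module.finBasis ℚ S
  let e : S ≃ₗ[ℚ] (Fin (Module.finrank ℚ S) → ℚ) := b.equivFun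
  let ι : Fin (Module.finrank ℚ S) → Fin r := Fin.castLE hd
  have hι : Function.Injective ι := Fin.castLE_injective hd
  let pad : (Fin (Module.finrank ℚ S) → ℚ) →ₗ[ℚ] (Fin r → ℚ) :=
    Function.ExtendByZero.linearMap ℚ ι
  let unpad : (Fin r → ℚ) →ₗ[ℚ] (Fin (Module.finrank ℚ S) → ℚ) :=
    LinearMap.funLeft ℚ ℚ ι
  have hup : ∀ v, unpad (pad v) = v := by
    intro v
    funext i
    show Function.extend ι v 0 (ι i) = v i
    exact hι.extend_apply _ _ _
  let g₁ : (Fin n → ℚ) →ₗ[ℚ] (Fin r → ℚ) :=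
    pad ∘ₗ (e : S →ₗ[ℚ] _) ∘ₗ M.mulVecLin.rangeRestrict
  let g₂ : (Fin r → ℚ) →ₗ[ℚ] (Fin n → ℚ) :=
    S.subtype ∘ₗ (e.symm : _ →ₗ[ℚ] S) ∘ₗ unpad
  have hcomp : g₂ ∘ₗ g₁ = M.mulVecLin := by
    ext x
    simp only [g₁, g₂, LinearMap.coe_comp, Function.comp_apply, LinearEquiv.coe_coe]
    rw [hup, e.symm_apply_apply]
    rfl
  refine ⟨LinearMap.toMatrix' g₂, LinearMap.toMatrix' g₁, ?_⟩
  rw [← LinearMap.toMatrix'_comp, hcomp, ← Matrix.toLin'_apply', LinearMap.toMatrix'_toLin']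

theorem stmt_9 (n p t : ℕ) (hn : 0 < n) (hp : 0 < p) (ht : 0 < t) (hpn : p < n)
    (P : Matrix (Fin p) (Fin n) ℚ) (Q : Matrix (Fin n) (Fin p) ℚ)
    (U : Fin t → Matrix (Fin n) (Fin n) ℚ) (hU : ∀ a, (U a).IsDiag)
    (hW₀ : IsUnit (P * Q))
    (W : Fin t → Matrix (Fin p) (Fin p) ℚ) (hW : ∀ a, W a = P * U a * Q)
    (Δ : Fin t → Fin t → Matrix (Fin p) (Fin p) ℚ)
    (hΔ : ∀ a b, Δ a b = W a * (P * Q)⁻¹ * W b - W b * (P * Q)⁻¹ * W a) :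
    ∃ (V : Fin t → Matrix (Fin p) (Fin (n - p)) ℚ)
      (G : Fin t → Matrix (Fin (n - p)) (Fin p) ℚ),
      ∀ a b, Δ a b = V a * G b - V b * G a := by
  classical
  have hdet : IsUnit (P * Q).det := (Matrix.isUnit_iff_isUnit_det _).mp hW₀
  have hWinv : (P * Q) * (P * Q)⁻¹ = 1 := Matrix.mul_nonsing_inv _ hdet
  set B : Matrix (Fin n) (Fin n) ℚ := Q * (P * Q)⁻¹ * P - 1 with hBdef
  have hPB : P * B = 0 := by
    rw [hBdef, Matrix.mul_sub, Matrix.mul_one, ← Matrix.mul_assoc, ← Matrix.mul_assoc,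
      hWinv, Matrix.one_mul, sub_self]
  -- rank bound
  have hrank : B.rank ≤ n - p := by
    have hsub : LinearMap.range B.mulVecLin ≤ LinearMap.ker P.mulVecLin := by
      rintro x ⟨y, rfl⟩
      have h1 : P.mulVecLin (B.mulVecLin y) = (P * B).mulVecLin y := by
        rw [Matrix.mulVecLin_mul]; rfl
      simp [LinearMap.mem_ker, h1, hPB]
    have h1 : B.rank ≤ Module.finrank ℚ (LinearMap.ker P.mulVecLin) :=
      Submodule.finrank_mono hsub
    have h2 : Module.finrank ℚ (LinearMap.range P.mulVecLin)
        + Module.finrank ℚ (LinearMap.ker P.mulVecLin) = n := by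
      rw [LinearMap.finrank_range_add_finrank_ker]
      simp
    have hrp : p ≤ P.rank := by
      have hle := Matrix.rank_mul_le_left P Q
      have hr : (P * Q).rank = p := by
        rw [Matrix.rank_of_isUnit _ hW₀, Fintype.card_fin]
      omega
    have hPr : P.rank = Module.finrank ℚ (LinearMap.range P.mulVecLin) := rfl
    omega
  obtain ⟨C, D, hB⟩ := factor_of_rank_le B hrank
  -- diagonal matrices commute
  have hcomm : ∀ a b, U a * U b = U b * U a := by
    intro a b
    rw [← (hU a).diagonal_diag, ← (hU b).diagonal_diag, Matrix.diagonal_mul_diagonal,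
      Matrix.diagonal_mul_diagonal]
    exact congrArg _ (funext fun i => mul_comm _ _)
  refine ⟨fun a => P * U a * C, fun a => D * (U a * Q), ?_⟩
  intro a b
  have key : ∀ a b, (P * U a * C) * (D * (U b * Q)) =
      W a * (P * Q)⁻¹ * W b - P * (U a * U b) * Q := by
    intro a b
    have h1 : (P * U a * C) * (D * (U b * Q)) = P * U a * (C * D) * (U b * Q) := by
      simp only [Matrix.mul_assoc]
    rw [h1, ← hB, hBdef, hW, hW]
    simp only [Matrix.mul_sub, Matrix.sub_mul, Matrix.mul_one, Matrix.one_mul,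
      Matrix.mul_assoc]
  rw [hΔ, key, key, hcomm a b]
  abel
end

section
/- Let n, p, r be positive integers with p ≤ n. Let P be a p×n matrix over ℚ and Q an n×p matrix over ℚ such that W_0 = P·Q is invertible, and set B = Q·W_0⁻¹·P − 1_n. Suppose B = B_1·B_2 where B_1 is an n×r matrix and B_2 is an r×n matrix over ℚ such that B_2 has rank r (i.e., the linear map defined by B_2 is surjective). Then P·B_1 = 0. -/
open Matrix

theorem stmt_10 (n p r : ℕ) (hn : 0 < n) (hp : 0 < p) (hr : 0 < r) (hpn : p ≤ n)
    (P : Matrix (Fin p) (Fin n) ℚ) (Q : Matrix (Fin n) (Fin p) ℚ)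
    (hW₀ : IsUnit (P * Q))
    (B : Matrix (Fin n) (Fin n) ℚ) (hB : B = Q * (P * Q)⁻¹ * P - 1)
    (B₁ : Matrix (Fin n) (Fin r) ℚ) (B₂ : Matrix (Fin r) (Fin n) ℚ)
    (hfac : B = B₁ * B₂) (hB₂ : B₂.rank = r) :
    P * B₁ = 0 := by
  have hPB : P * B = 0 := by
    rw [hB, Matrix.mul_sub, Matrix.mul_one, ← Matrix.mul_assoc, ← Matrix.mul_assoc,
      Matrix.mul_nonsing_inv _ ((Matrix.isUnit_iff_isUnit_det _).mp hW₀), Matrix.one_mul,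
      sub_self]
  have h0 : (P * B₁) * B₂ = 0 := by rw [Matrix.mul_assoc, ← hfac, hPB]
  -- B₂ᵀ has trivial kernel
  have hrT : B₂ᵀ.rank = r := by rw [Matrix.rank_transpose]; exact hB₂
  have hinj : Function.Injective (B₂ᵀ.mulVecLin) := by
    rw [← LinearMap.ker_eq_bot]
    have := LinearMap.finrank_range_add_finrank_ker (B₂ᵀ.mulVecLin)
    rw [Matrix.rank] at hrT
    rw [hrT] at this
    simp only [Module.finrank_pi, Fintype.card_fin] at this
    have hker : Module.finrank ℚ (LinearMap.ker B₂ᵀ.mulVecLin) = 0 := by omega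
    exact Submodule.finrank_eq_zero.mp hker
  -- from h0: B₂ᵀ * (P*B₁)ᵀ = 0
  have h0T : B₂ᵀ * (P * B₁)ᵀ = 0 := by
    have := congrArg Matrix.transpose h0
    rwa [Matrix.transpose_mul, Matrix.transpose_zero] at this
  have hz : (P * B₁)ᵀ = 0 := by
    ext i j
    have : B₂ᵀ.mulVecLin (fun i' => (P * B₁)ᵀ i' j) = B₂ᵀ.mulVecLin 0 := by
      simp only [Matrix.mulVecLin_apply, Matrix.mulVec_zero]
      ext k
      have := congrFun (congrFun h0T k) j
      simp only [Matrix.mul_apply, Matrix.mulVec, dotProduct, Matrix.transpose_apply,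
        Pi.zero_apply] at this ⊢
      simpa using this
    have hc := hinj this
    have := congrFun hc i
    simpa [Matrix.replicateCol] using this
  have := congrArg Matrix.transpose hz
  rwa [Matrix.transpose_transpose, Matrix.transpose_zero] at this
end

section
/- Let n, p be positive integers with p < n and set r = n − p. Let P be a p×n matrix over ℚ and Q an n×p matrix over ℚ such that W_0 = P·Q is invertible, and set B = Q·W_0⁻¹·P − 1_n. Suppose B = B_1·B_2 where B_1 is an n×r matrix and B_2 is an r×n matrix over ℚ of rank r. Then the n×n matrix Q′ = [Q | B_1], obtained by concatenating the columns of Q and B_1, is invertible. -/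
open Matrix

theorem stmt_11 (n p : ℕ) (hn : 0 < n) (hp : 0 < p) (hpn : p < n)
    (P : Matrix (Fin p) (Fin n) ℚ) (Q : Matrix (Fin n) (Fin p) ℚ)
    (hW₀ : IsUnit (P * Q))
    (B : Matrix (Fin n) (Fin n) ℚ) (hB : B = Q * (P * Q)⁻¹ * P - 1)
    (B₁ : Matrix (Fin n) (Fin (n - p)) ℚ) (B₂ : Matrix (Fin (n - p)) (Fin n) ℚ)
    (hfac : B = B₁ * B₂) (hB₂ : B₂.rank = n - p) :
    ∃ M : Matrix (Fin p ⊕ Fin (n - p)) (Fin n) ℚ,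
      Matrix.fromCols Q B₁ * M = 1 ∧ M * Matrix.fromCols Q B₁ = 1 := by
  refine ⟨Matrix.fromRows ((P * Q)⁻¹ * P) (-B₂), ?_, ?_⟩
  · rw [fromCols_mul_fromRows, Matrix.mul_neg, ← Matrix.mul_assoc, ← hfac, hB]
    abel
  · have e : Fin p ⊕ Fin (n - p) ≃ Fin n :=
      (finSumFinEquiv.trans (finCongr (Nat.add_sub_cancel' hpn.le)))
    refine (Matrix.mul_eq_one_comm_of_equiv e).mpr ?_
    rw [fromCols_mul_fromRows, Matrix.mul_neg, ← Matrix.mul_assoc, ← hfac, hB]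
    abel
end

section
/- Let n, p, t be positive integers with p < n and set r = n − p. Let P be a p×n matrix over ℚ, Q an n×p matrix over ℚ, and U_1, …, U_t diagonal n×n matrices over ℚ, such that W_0 = P·Q is invertible; set W_a = P·U_a·Q. Let B = Q·W_0⁻¹·P − 1_n and suppose B = B_1·B_2 with B_1 ∈ ℚ^{n×r} and B_2 ∈ ℚ^{r×n} of rank r. Set V_a = P·U_a·B_1 and Q′ = [Q | B_1]. Then Q′ is an invertible n×n matrix, P·Q′ = [W_0 | 0_{p×r}], and P·U_a·Q′ = [W_a | V_a] for every a = 1, …, t. -/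
open Matrix

theorem stmt_12 (n p t : ℕ) (hn : 0 < n) (hp : 0 < p) (ht : 0 < t) (hpn : p < n)
    (P : Matrix (Fin p) (Fin n) ℚ) (Q : Matrix (Fin n) (Fin p) ℚ)
    (U : Fin t → Matrix (Fin n) (Fin n) ℚ) (hU : ∀ a, (U a).IsDiag)
    (hW₀ : IsUnit (P * Q))
    (W : Fin t → Matrix (Fin p) (Fin p) ℚ) (hW : ∀ a, W a = P * U a * Q)
    (B : Matrix (Fin n) (Fin n) ℚ) (hB : B = Q * (P * Q)⁻¹ * P - 1)
    (B₁ : Matrix (Fin n) (Fin (n - p)) ℚ) (B₂ : Matrix (Fin (n - p)) (Fin n) ℚ)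
    (hfac : B = B₁ * B₂) (hB₂ : B₂.rank = n - p)
    (V : Fin t → Matrix (Fin p) (Fin (n - p)) ℚ) (hV : ∀ a, V a = P * U a * B₁)
    (Q' : Matrix (Fin n) (Fin p ⊕ Fin (n - p)) ℚ) (hQ' : Q' = Matrix.fromCols Q B₁) :
    (∃ M : Matrix (Fin p ⊕ Fin (n - p)) (Fin n) ℚ, Q' * M = 1 ∧ M * Q' = 1) ∧
    P * Q' = Matrix.fromCols (P * Q) 0 ∧
    (∀ a, P * U a * Q' = Matrix.fromCols (W a) (V a)) := by
  have hdet : IsUnit (P * Q).det := (Matrix.isUnit_iff_isUnit_det _).mp hW₀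
  have hPB : P * B = 0 := by
    rw [hB, Matrix.mul_sub, Matrix.mul_one]
    rw [show P * (Q * (P * Q)⁻¹ * P) = (P * Q) * (P * Q)⁻¹ * P by
      simp only [Matrix.mul_assoc]]
    rw [Matrix.mul_nonsing_inv _ hdet, Matrix.one_mul, sub_self]
  -- B₂ is surjective as a linear map
  have hsurj : Function.Surjective B₂.mulVecLin := by
    rw [← LinearMap.range_eq_top]
    apply Submodule.eq_top_of_finrank_eq
    rw [← Matrix.rank, hB₂]
    simp [Module.finrank_fintype_fun_eq_card]
  have hPB₁ : P * B₁ = 0 := by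
    have h0 : (P * B₁) * B₂ = 0 := by rw [Matrix.mul_assoc, ← hfac, hPB]
    have : ∀ v, (P * B₁).mulVec v = 0 := by
      intro v
      obtain ⟨w, rfl⟩ := hsurj v
      rw [Matrix.mulVecLin_apply, Matrix.mulVec_mulVec, h0, Matrix.zero_mulVec]
    ext i j
    have := congrFun (this (Pi.single j 1)) i
    simpa [Matrix.mulVec_single] using this
  have key : ∀ (X : Matrix (Fin p) (Fin n) ℚ),
      X * Q' = Matrix.fromCols (X * Q) (X * B₁) := by
    intro X
    rw [hQ', Matrix.mul_fromCols]
  have hQM : Q' * Matrix.fromRows ((P * Q)⁻¹ * P) (-B₂) = 1 := by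
    rw [hQ', Matrix.fromCols_mul_fromRows]
    have h2 : B₁ * B₂ = Q * (P * Q)⁻¹ * P - 1 := by rw [← hfac, hB]
    rw [Matrix.mul_neg, h2]
    rw [show Q * ((P * Q)⁻¹ * P) = Q * (P * Q)⁻¹ * P by rw [Matrix.mul_assoc]]
    abel
  refine ⟨?_, ?_, ?_⟩
  · refine ⟨Matrix.fromRows ((P * Q)⁻¹ * P) (-B₂), hQM, ?_⟩
    have e : Fin p ⊕ Fin (n - p) ≃ Fin n :=
      (finSumFinEquiv).trans (finCongr (by omega))
    rw [Matrix.mul_eq_one_comm_of_equiv e, hQM]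
  · rw [key, hPB₁]
  · intro a
    rw [key, hW a, hV a]
end

section
/- Let K be a field and V, W vector spaces over K. Let f, g : V → W be linear maps such that ker(f) + ker(g) = V. Then the range of f is contained in the range of f − g. In particular, for p×p matrices M, N over ℚ with ker(M) + ker(N) = ℚᵖ, the column space of M is contained in the column space of M − N. -/
open Matrix

theorem stmt_13 :
    (∀ (K : Type) [Field K] (V W : Type) [AddCommGroup V] [Module K V]
      [AddCommGroup W] [Module K W] (f g : V →ₗ[K] W),
      LinearMap.ker f ⊔ LinearMap.ker g = ⊤ →
      LinearMap.range f ≤ LinearMap.range (f - g)) ∧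
    (∀ (p : ℕ) (M N : Matrix (Fin p) (Fin p) ℚ),
      LinearMap.ker M.mulVecLin ⊔ LinearMap.ker N.mulVecLin = ⊤ →
      LinearMap.range M.mulVecLin ≤ LinearMap.range (M - N).mulVecLin) := by
  have main : ∀ (K : Type) [Field K] (V W : Type) [AddCommGroup V] [Module K V]
      [AddCommGroup W] [Module K W] (f g : V →ₗ[K] W),
      LinearMap.ker f ⊔ LinearMap.ker g = ⊤ →
      LinearMap.range f ≤ LinearMap.range (f - g) := by
    intro K _ V W _ _ _ _ f g h x hx
    obtain ⟨v, rfl⟩ := hx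
    have hv : v ∈ LinearMap.ker f ⊔ LinearMap.ker g := h ▸ Submodule.mem_top
    obtain ⟨a, ha, b, hb, rfl⟩ := Submodule.mem_sup.mp hv
    refine ⟨b, ?_⟩
    simp only [LinearMap.sub_apply, LinearMap.mem_ker.mp hb, sub_zero, map_add,
      LinearMap.mem_ker.mp ha, zero_add]
  refine ⟨main, fun p M N h => ?_⟩
  have : (M - N).mulVecLin = M.mulVecLin - N.mulVecLin := by
    ext v i; simp [Matrix.mulVecLin, Matrix.sub_mulVec]
  rw [this]
  exact main ℚ _ _ _ _ h
end
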